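/- Let E = (V, E, s, t) be a directed graph, E_0 = (V_0, E_0) a directed subgraph (V_0 ⊆ V, E_0 ⊆ E, endpoints of edges in E_0 lie in V_0). Suppose E_0 is endpoint-closed in E: for every profile-loop (p; e') of E with p a composable path all of whose edges lie in E_0, the edge e' lies in E_0. Then for any two profile-loops u = (p; e_0) and u' = (q; e_i) of E such that the composition u ∘_i u' is defined and all edges of the path and output of u ∘_i u' lie in E_0, both u and u' have all their edges (inputs and output) in E_0. -/

import Mathlib

/-- A profile-loop in a directed graph `(V, E, s, t)`. -/
structure ProfileLoop (V E : Type) (s t : E → V) where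
  path : List E
  out : E
  chain : path.Chain' (fun e f => t e = s f)
  src_eq : ∀ e ∈ path.head?, s e = s out
  tgt_eq : ∀ e ∈ path.getLast?, t e = t out
  loop_empty : path = [] → s out = t out

/-- Splicing a list `q` into the `i`-th (1-indexed) position of a list `p`. -/
def splice {E : Type} (p q : List E) (i : ℕ) : List E :=
  p.take (i - 1) ++ q ++ p.drop i

/-- Endpoint-closedness implies factor-closedness.  Let `(V₀, E₀)` be a
directed subgraph of `(V, E, s, t)` (edges of `E₀` have endpoints in `V₀`)
which is endpoint-closed: for every profile-loop `(p; e')` of `E` whose input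
path lies in `E₀` (for the empty path: whose base vertex lies in `V₀`), the
output edge `e'` lies in `E₀`.  Then for any profile-loops `u = (p; e₀)` and
`u' = (q; eᵢ)` whose partial composition `u ∘ᵢ u'` is defined and has all its
input edges and its output edge in `E₀` (for the empty spliced path: base
vertex in `V₀`), both `u` and `u'` have all their input edges and their output
edges in `E₀`. -/
theorem endpoint_closed_implies_factor_closed {V E : Type} (s t : E → V)
    (V₀ : Set V) (E₀ : Set E)
    (hsub : ∀ e ∈ E₀, s e ∈ V₀ ∧ t e ∈ V₀)
    (hclosed : ∀ u : ProfileLoop V E s t,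
        (∀ e ∈ u.path, e ∈ E₀) → (u.path = [] → s u.out ∈ V₀) → u.out ∈ E₀)
    (u u' : ProfileLoop V E s t) (i : ℕ)
    (hi1 : 1 ≤ i) (hin : i ≤ u.path.length)
    (hmatch : u.path[i - 1]? = some u'.out)
    (hcomp_path : ∀ e ∈ splice u.path u'.path i, e ∈ E₀)
    (hcomp_out : u.out ∈ E₀)
    (hcomp_empty : splice u.path u'.path i = [] → s u.out ∈ V₀) :
    ((∀ e ∈ u.path, e ∈ E₀) ∧ u.out ∈ E₀) ∧
    ((∀ e ∈ u'.path, e ∈ E₀) ∧ u'.out ∈ E₀) := by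
  obtain ⟨hlt, hget⟩ := List.getElem?_eq_some_iff.mp hmatch
  have hget : u.path.get ⟨i - 1, hlt⟩ = u'.out := hget
  -- membership lemmas for the splice
  have htake : ∀ e ∈ u.path.take (i - 1), e ∈ E₀ := fun e he =>
    hcomp_path e (by simp [splice, List.mem_append]; tauto)
  have hdrop : ∀ e ∈ u.path.drop i, e ∈ E₀ := fun e he =>
    hcomp_path e (by simp [splice, List.mem_append]; tauto)
  have hq : ∀ e ∈ u'.path, e ∈ E₀ := fun e he =>
    hcomp_path e (by simp [splice, List.mem_append]; tauto)
  -- u'.out is in E₀, by endpoint-closedness applied to u'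
  have hout' : u'.out ∈ E₀ := by
    refine hclosed u' hq ?_
    intro hq0
    -- s u'.out = s (p[i-1])
    have hs : s u'.out = s (u.path.get ⟨i - 1, hlt⟩) := by rw [hget]
    rcases Nat.lt_or_ge 1 i with hi2 | hi2
    · -- i > 1 : use chain with the previous edge
      have hlt2 : i - 2 < u.path.length := by omega
      have hchain : t (u.path.get ⟨i - 2, hlt2⟩) = s (u.path.get ⟨i - 2 + 1, by omega⟩) := List.isChain_iff_getElem.mp u.chain (i - 2) (by omega)
      have hidx : i - 2 + 1 = i - 1 := by omega
      simp only [hidx] at hchain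
      have h2 : i - 2 < (u.path.take (i - 1)).length := by
        simp [List.length_take]; omega
      have hprev_mem : u.path.get ⟨i - 2, hlt2⟩ ∈ u.path.take (i - 1) := by
        have hm := List.getElem_mem (l := u.path.take (i - 1)) (n := i - 2) h2
        rwa [List.getElem_take] at hm
      have hprev : u.path.get ⟨i - 2, hlt2⟩ ∈ E₀ := htake _ hprev_mem
      rw [hs, ← hchain]
      exact (hsub _ hprev).2
    · -- i = 1 : s (p[0]) = s u.out
      have hi : i = 1 := le_antisymm hi2 hi1
      have hhead : u.path.head? = some u'.out := by
        rw [List.head?_eq_getElem?]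
        simpa [hi] using hmatch
      have := u.src_eq u'.out (Option.mem_def.mpr hhead)
      rw [this]
      exact (hsub _ hcomp_out).1
  -- decompose u.path
  have hsplit : u.path = u.path.take (i - 1) ++ u'.out :: u.path.drop i := by
    conv_lhs => rw [← List.take_append_drop (i - 1) u.path]
    congr 1
    rw [List.drop_eq_getElem_cons hlt, show u.path[i - 1] = u'.out from hget]
    congr 2
    omega
  refine ⟨⟨?_, hcomp_out⟩, hq, hout'⟩
  intro e he
  rw [hsplit] at he
  simp only [List.mem_append, List.mem_cons] at he
  rcases he with h | h | h
  · exact htake e h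
  · exact h ▸ hout'
  · exact hdrop e h
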